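/- For all real d×d positive semidefinite matrices A, B, and C, the Bures distance d_B(A,B) = (Tr[A + B − 2 (A^{1/2} B A^{1/2})^{1/2}])^{1/2} satisfies the triangle inequality d_B(A,C) ≤ d_B(A,B) + d_B(B,C). -/

import Mathlib

open MeasureTheory ProbabilityTheory Matrix
open scoped Classical

/-- The unique positive semidefinite square root of a positive semidefinite real matrix
(junk value `0` if the matrix is not positive semidefinite). -/
noncomputable def psdSqrt {d : ℕ} (M : Matrix (Fin d) (Fin d) ℝ) : Matrix (Fin d) (Fin d) ℝ :=
  if h : M.PosSemidef then
    (h.1.eigenvectorUnitary : Matrix (Fin d) (Fin d) ℝ) *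
      diagonal ((↑) ∘ Real.sqrt ∘ h.1.eigenvalues) *
      (star h.1.eigenvectorUnitary : Matrix (Fin d) (Fin d) ℝ)
  else 0

/-- The squared Bures distance `Tr[A + B − 2 (A^{1/2} B A^{1/2})^{1/2}]`. -/
noncomputable def buresSq {d : ℕ} (A B : Matrix (Fin d) (Fin d) ℝ) : ℝ :=
  (A + B - 2 • psdSqrt (psdSqrt A * B * psdSqrt A)).trace

noncomputable def Matrix.PosSemidef.sqrt {d : ℕ} {M : Matrix (Fin d) (Fin d) ℝ} (h : M.PosSemidef) :
    Matrix (Fin d) (Fin d) ℝ :=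
  (h.1.eigenvectorUnitary : Matrix (Fin d) (Fin d) ℝ) *
    diagonal ((↑) ∘ Real.sqrt ∘ h.1.eigenvalues) *
    (star h.1.eigenvectorUnitary : Matrix (Fin d) (Fin d) ℝ)

lemma Matrix.PosSemidef.posSemidef_sqrt {d : ℕ} {M : Matrix (Fin d) (Fin d) ℝ}
    (h : M.PosSemidef) : h.sqrt.PosSemidef := by
  unfold Matrix.PosSemidef.sqrt
  rw [star_eq_conjTranspose]
  exact (posSemidef_diagonal_iff.mpr (fun i => by simpa using Real.sqrt_nonneg _)).mul_mul_conjTranspose_same _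

lemma Matrix.PosSemidef.sqrt_mul_self {d : ℕ} {M : Matrix (Fin d) (Fin d) ℝ}
    (h : M.PosSemidef) : h.sqrt * h.sqrt = M := by
  unfold Matrix.PosSemidef.sqrt
  have hU := Unitary.coe_star_mul_self h.1.eigenvectorUnitary
  set U : Matrix (Fin d) (Fin d) ℝ := (h.1.eigenvectorUnitary : Matrix (Fin d) (Fin d) ℝ)
  set D : Matrix (Fin d) (Fin d) ℝ := diagonal ((↑) ∘ Real.sqrt ∘ h.1.eigenvalues)
  have hd : D * D = diagonal ((↑) ∘ h.1.eigenvalues) := by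
    rw [diagonal_mul_diagonal]; congr 1; funext i
    simp [Real.mul_self_sqrt (h.eigenvalues_nonneg i)]
  calc U * D * star U * (U * D * star U) = U * (D * (star U * U) * D) * star U := by
        simp only [mul_assoc]
    _ = M := by
        rw [hU, mul_one, hd]
        conv_rhs => rw [h.1.spectral_theorem]
        simp [Unitary.conjStarAlgAut_apply, U, mul_assoc]
        rfl

namespace BuresAux

variable {d : ℕ}

lemma psdSqrt_eq {M : Matrix (Fin d) (Fin d) ℝ} (h : M.PosSemidef) : psdSqrt M = h.sqrt :=
  dif_pos h

lemma psdSqrt_posSemidef {M : Matrix (Fin d) (Fin d) ℝ} (h : M.PosSemidef) :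
    (psdSqrt M).PosSemidef := by rw [psdSqrt_eq h]; exact h.posSemidef_sqrt

lemma psdSqrt_mul_self {M : Matrix (Fin d) (Fin d) ℝ} (h : M.PosSemidef) :
    psdSqrt M * psdSqrt M = M := by rw [psdSqrt_eq h]; exact h.sqrt_mul_self

lemma transpose_eq_self {M : Matrix (Fin d) (Fin d) ℝ} (h : M.PosSemidef) :
    Mᵀ = M := by
  rw [← conjTranspose_eq_transpose_of_trivial]; exact h.isHermitian

lemma psdSqrt_transpose {M : Matrix (Fin d) (Fin d) ℝ} (h : M.PosSemidef) :
    (psdSqrt M)ᵀ = psdSqrt M := transpose_eq_self (psdSqrt_posSemidef h)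

lemma posSemidef_transpose_mul_self (M : Matrix (Fin d) (Fin d) ℝ) : (Mᵀ * M).PosSemidef := by
  simpa [conjTranspose_eq_transpose_of_trivial] using posSemidef_conjTranspose_mul_self M

/-- Squared Frobenius norm. -/
noncomputable def frobSq (M : Matrix (Fin d) (Fin d) ℝ) : ℝ := (Mᵀ * M).trace

lemma frobSq_eq_sum (M : Matrix (Fin d) (Fin d) ℝ) :
    frobSq M = ∑ p : Fin d × Fin d, (M p.1 p.2) ^ 2 := by
  rw [frobSq, Matrix.trace, ← Finset.univ_product_univ, Finset.sum_product_right]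
  simp [Matrix.diag, Matrix.mul_apply, sq]

lemma frobSq_nonneg (M : Matrix (Fin d) (Fin d) ℝ) : 0 ≤ frobSq M := by
  rw [frobSq_eq_sum]; positivity

lemma trace_transpose_mul_eq (P Q : Matrix (Fin d) (Fin d) ℝ) :
    (Pᵀ * Q).trace = ∑ p : Fin d × Fin d, P p.1 p.2 * Q p.1 p.2 := by
  rw [Matrix.trace, ← Finset.univ_product_univ, Finset.sum_product_right]
  simp [Matrix.diag, Matrix.mul_apply]

/-- Cauchy–Schwarz for the Frobenius inner product. -/
lemma trace_le_sqrt_mul_sqrt (P Q : Matrix (Fin d) (Fin d) ℝ) :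
    (Pᵀ * Q).trace ≤ Real.sqrt (frobSq P) * Real.sqrt (frobSq Q) := by
  rw [trace_transpose_mul_eq, ← Real.sqrt_mul (frobSq_nonneg P)]
  calc ∑ p : Fin d × Fin d, P p.1 p.2 * Q p.1 p.2
      ≤ |∑ p : Fin d × Fin d, P p.1 p.2 * Q p.1 p.2| := le_abs_self _
    _ = Real.sqrt ((∑ p : Fin d × Fin d, P p.1 p.2 * Q p.1 p.2) ^ 2) :=
        (Real.sqrt_sq_eq_abs _).symm
    _ ≤ Real.sqrt (frobSq P * frobSq Q) := by
        apply Real.sqrt_le_sqrt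
        rw [frobSq_eq_sum, frobSq_eq_sum]
        exact Finset.sum_mul_sq_le_sq_mul_sq _ _ _

lemma frobSq_add_le (P Q : Matrix (Fin d) (Fin d) ℝ) :
    Real.sqrt (frobSq (P + Q)) ≤ Real.sqrt (frobSq P) + Real.sqrt (frobSq Q) := by
  have h1 : frobSq (P + Q) = frobSq P + frobSq Q + 2 * (Pᵀ * Q).trace := by
    have ht : (Qᵀ * P).trace = (Pᵀ * Q).trace := by
      rw [← Matrix.trace_transpose (Qᵀ * P), Matrix.transpose_mul, Matrix.transpose_transpose]
    simp only [frobSq, Matrix.transpose_add, Matrix.add_mul, Matrix.mul_add, Matrix.trace_add, ht]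
    ring
  have h2 : frobSq (P + Q) ≤ (Real.sqrt (frobSq P) + Real.sqrt (frobSq Q)) ^ 2 := by
    rw [h1, add_sq, Real.sq_sqrt (frobSq_nonneg P), Real.sq_sqrt (frobSq_nonneg Q)]
    have := trace_le_sqrt_mul_sqrt P Q
    nlinarith
  calc Real.sqrt (frobSq (P + Q)) ≤ Real.sqrt ((Real.sqrt (frobSq P) + Real.sqrt (frobSq Q)) ^ 2) :=
        Real.sqrt_le_sqrt h2
    _ = Real.sqrt (frobSq P) + Real.sqrt (frobSq Q) := by
        rw [Real.sqrt_sq (by positivity)]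

lemma frobSq_mul_orth (P U : Matrix (Fin d) (Fin d) ℝ) (hU : U * Uᵀ = 1) :
    frobSq (P * U) = frobSq P := by
  rw [frobSq, frobSq, Matrix.transpose_mul,
    show Uᵀ * Pᵀ * (P * U) = Uᵀ * (Pᵀ * P * U) by noncomm_ring, Matrix.trace_mul_comm,
    show Pᵀ * P * U * Uᵀ = Pᵀ * P * (U * Uᵀ) by noncomm_ring, hU, Matrix.mul_one]


/-- For PSD `S` and orthogonal `Q`, `tr(Q S) ≤ tr S`. -/
lemma trace_orth_mul_le {S Q : Matrix (Fin d) (Fin d) ℝ} (hS : S.PosSemidef)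
    (hQ : Qᵀ * Q = 1) : (Q * S).trace ≤ S.trace := by
  set R := psdSqrt S with hR
  have hRR : R * R = S := psdSqrt_mul_self hS
  have hRT : Rᵀ = R := psdSqrt_transpose hS
  have h1 : (Q * S).trace = (Rᵀ * (Q * R)).trace := by
    calc (Q * S).trace = ((Q * R) * R).trace := by rw [← hRR, ← Matrix.mul_assoc]
      _ = (R * (Q * R)).trace := Matrix.trace_mul_comm _ _
      _ = (Rᵀ * (Q * R)).trace := by rw [hRT]
  have h2 : frobSq (Q * R) = frobSq R := by
    rw [frobSq, frobSq, Matrix.transpose_mul,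
      show Rᵀ * Qᵀ * (Q * R) = Rᵀ * (Qᵀ * Q * R) by noncomm_ring, hQ, Matrix.one_mul]
  have h3 := trace_le_sqrt_mul_sqrt R (Q * R)
  rw [h2, ← Real.sqrt_mul (frobSq_nonneg R), Real.sqrt_mul_self (frobSq_nonneg R)] at h3
  have h4 : frobSq R = S.trace := by rw [frobSq, hRT, hRR]
  rw [h1]; linarith

lemma polar (M : Matrix (Fin d) (Fin d) ℝ) (hH : (Mᵀ * M).PosSemidef) :
    ∃ W : Matrix (Fin d) (Fin d) ℝ, Wᵀ * W = 1 ∧ M = W * hH.sqrt := by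
  set H := Mᵀ * M with hHdef
  set lam := hH.1.eigenvalues with hlamdef
  have hlam0 : ∀ i, 0 ≤ lam i := hH.eigenvalues_nonneg
  set v : Fin d → (Fin d → ℝ) := fun i => ⇑(hH.1.eigenvectorBasis i) with hvdef
  -- dot products of eigenvectors
  have horthv : ∀ i j, v i ⬝ᵥ v j = if i = j then 1 else 0 := by
    intro i j
    have := (orthonormal_iff_ite.mp hH.1.eigenvectorBasis.orthonormal) i j
    rw [EuclideanSpace.inner_eq_star_dotProduct] at this
    rw [dotProduct_comm]; simpa [hvdef] using this
  -- key: ⟨Mx, My⟩ = x ⬝ᵥ H y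
  have hkey : ∀ x y : Fin d → ℝ, (M *ᵥ x) ⬝ᵥ (M *ᵥ y) = x ⬝ᵥ (H *ᵥ y) := by
    intro x y
    rw [hHdef, ← mulVec_mulVec, dotProduct_mulVec x, vecMul_transpose]
  have hMvdot : ∀ i j, (M *ᵥ v i) ⬝ᵥ (M *ᵥ v j) = if i = j then lam j else 0 := by
    intro i j
    rw [hkey, hH.1.mulVec_eigenvectorBasis, dotProduct_smul, horthv]
    simp [ite_mul, hlamdef]
  -- the partial isometry columns
  set s : Set (Fin d) := {i | lam i ≠ 0} with hsdef
  set u : Fin d → EuclideanSpace ℝ (Fin d) :=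
    fun i => (WithLp.equiv 2 (Fin d → ℝ)).symm ((Real.sqrt (lam i))⁻¹ • (M *ᵥ v i)) with hudef
  have horthu : Orthonormal ℝ (s.restrict u) := by
    rw [orthonormal_iff_ite]
    rintro ⟨i, hi⟩ ⟨j, hj⟩
    change inner ℝ (u i) (u j) = _
    rw [hudef,
      EuclideanSpace.inner_eq_star_dotProduct]
    have hi' : lam i ≠ 0 := hi
    have hj' : lam j ≠ 0 := hj
    have hdot : ((Real.sqrt (lam i))⁻¹ • (M *ᵥ v i)) ⬝ᵥ ((Real.sqrt (lam j))⁻¹ • (M *ᵥ v j))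
        = (Real.sqrt (lam i))⁻¹ * ((Real.sqrt (lam j))⁻¹ * ((M *ᵥ v i) ⬝ᵥ (M *ᵥ v j))) := by
      rw [smul_dotProduct, dotProduct_smul]; simp [mul_assoc]
    rw [show (star ((WithLp.equiv 2 (Fin d → ℝ)).symm
      ((Real.sqrt (lam i))⁻¹ • (M *ᵥ v i))).ofLp) = (Real.sqrt (lam i))⁻¹ • (M *ᵥ v i) by simp]
    rw [show ((WithLp.equiv 2 (Fin d → ℝ)).symm
      ((Real.sqrt (lam j))⁻¹ • (M *ᵥ v j))).ofLp = (Real.sqrt (lam j))⁻¹ • (M *ᵥ v j) from rfl,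
      dotProduct_comm]
    rw [hdot, hMvdot]
    by_cases hij : i = j
    · subst hij
      simp only [if_pos rfl, Subtype.mk.injEq, if_true, ← mul_assoc]
      have h1 : Real.sqrt (lam i) * Real.sqrt (lam i) = lam i := Real.mul_self_sqrt (hlam0 i)
      have h2 : Real.sqrt (lam i) ≠ 0 :=
        Real.sqrt_ne_zero'.mpr (lt_of_le_of_ne (hlam0 i) (Ne.symm hi'))
      rw [← h1]
      field_simp
      rw [Real.sqrt_sq (Real.sqrt_nonneg _)]
    · rw [if_neg hij, if_neg (by simpa [Subtype.ext_iff] using hij)]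
      ring
  obtain ⟨b, hb⟩ := horthu.exists_orthonormalBasis_extension_of_card_eq
    (by simp [finrank_euclideanSpace_fin])
  -- matrices
  set Vm : Matrix (Fin d) (Fin d) ℝ := (hH.1.eigenvectorUnitary : Matrix (Fin d) (Fin d) ℝ)
    with hVmdef
  set Bm : Matrix (Fin d) (Fin d) ℝ := Matrix.of (fun i j => b j i) with hBmdef
  have hVo : Vmᵀ * Vm = 1 := by
    have := Unitary.coe_star_mul_self hH.1.eigenvectorUnitary
    rwa [star_eq_conjTranspose, conjTranspose_eq_transpose_of_trivial] at this
  have hBo : Bmᵀ * Bm = 1 := by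
    ext i j
    have := (orthonormal_iff_ite.mp b.orthonormal) i j
    rw [EuclideanSpace.inner_eq_star_dotProduct] at this
    simp only [mul_apply, transpose_apply, hBmdef, Matrix.of_apply, one_apply]
    simpa [dotProduct, mul_comm] using this
  set W : Matrix (Fin d) (Fin d) ℝ := Bm * Vmᵀ with hWdef
  have hWo : Wᵀ * W = 1 := by
    rw [hWdef, transpose_mul, transpose_transpose,
      show Vm * Bmᵀ * (Bm * Vmᵀ) = Vm * (Bmᵀ * Bm) * Vmᵀ by noncomm_ring, hBo, mul_one,
      mul_eq_one_comm.mp hVo]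
  refine ⟨W, hWo, ?_⟩
  -- action of sqrt on eigenvectors
  have hstarV : ∀ k, Vmᵀ *ᵥ v k = Pi.single k 1 := by
    intro k
    have := hH.1.star_eigenvectorUnitary_mulVec k
    rwa [star_eq_conjTranspose, conjTranspose_eq_transpose_of_trivial] at this
  have hVsingle : ∀ k, Vm *ᵥ Pi.single k 1 = v k := fun k => hH.1.eigenvectorUnitary_mulVec k
  have hSv : ∀ k, hH.sqrt *ᵥ v k = Real.sqrt (lam k) • v k := by
    intro k
    rw [Matrix.PosSemidef.sqrt, ← mulVec_mulVec, ← mulVec_mulVec]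
    rw [show (star hH.1.eigenvectorUnitary : Matrix (Fin d) (Fin d) ℝ) *ᵥ v k = Pi.single k 1 from
      hH.1.star_eigenvectorUnitary_mulVec k]
    rw [diagonal_mulVec_single]
    simp only [Function.comp_apply, mul_one, RCLike.ofReal_real_eq_id, id_eq]
    have hdiag : (Pi.single k (Real.sqrt (hH.1.eigenvalues k)) : Fin d → ℝ)
        = Real.sqrt (lam k) • (Pi.single k 1 : Fin d → ℝ) := by
      ext i
      by_cases h : i = k <;> simp [Pi.single_apply, h, hlamdef]
    rw [hdiag, mulVec_smul, hVsingle]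
  -- action of M on eigenvectors
  have hMv : ∀ k, M *ᵥ v k = Real.sqrt (lam k) • ⇑(b k) := by
    intro k
    by_cases hk : lam k = 0
    · have h0 : (M *ᵥ v k) ⬝ᵥ (M *ᵥ v k) = 0 := by rw [hMvdot, if_pos rfl, hk]
      rw [dotProduct_self_eq_zero.mp h0, hk, Real.sqrt_zero, zero_smul]
    · have hbk : b k = u k := hb k hk
      have hsq : Real.sqrt (lam k) ≠ 0 :=
        Real.sqrt_ne_zero'.mpr (lt_of_le_of_ne (hlam0 k) (Ne.symm hk))
      rw [hbk, hudef]
      have : ⇑((WithLp.equiv 2 (Fin d → ℝ)).symm ((Real.sqrt (lam k))⁻¹ • (M *ᵥ v k)))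
          = (Real.sqrt (lam k))⁻¹ • (M *ᵥ v k) := rfl
      rw [this, smul_smul, mul_inv_cancel₀ hsq, one_smul]
  -- conclude
  have hcols : ∀ k, (W * hH.sqrt) *ᵥ v k = M *ᵥ v k := by
    intro k
    rw [← mulVec_mulVec, hSv, mulVec_smul, hWdef, ← mulVec_mulVec, hstarV]
    rw [hMv k]
    congr 1
    ext i
    simp [mulVec_single, hBmdef]
  have hVinv : Vm * Vmᵀ = 1 := mul_eq_one_comm.mp hVo
  have hcolmat : (W * hH.sqrt) * Vm = M * Vm := by
    ext i k
    have h1 : ∀ (P : Matrix (Fin d) (Fin d) ℝ), (P * Vm) i k = (P *ᵥ v k) i := by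
      intro P
      simp [mul_apply, mulVec, dotProduct, hVmdef, hvdef]
    rw [h1, h1, hcols]
  calc M = M * (Vm * Vmᵀ) := by rw [hVinv, mul_one]
    _ = (M * Vm) * Vmᵀ := by rw [mul_assoc]
    _ = ((W * hH.sqrt) * Vm) * Vmᵀ := by rw [hcolmat]
    _ = W * hH.sqrt := by rw [mul_assoc, hVinv, mul_one]


lemma trace_orth_le_trace_sqrt (M U : Matrix (Fin d) (Fin d) ℝ) (hU : Uᵀ * U = 1) :
    (U * M).trace ≤ (psdSqrt (Mᵀ * M)).trace := by
  have hH := posSemidef_transpose_mul_self M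
  obtain ⟨W, hWo, hMW⟩ := polar M hH
  rw [psdSqrt_eq hH]
  have horth : (U * W)ᵀ * (U * W) = 1 := by
    rw [transpose_mul, show Wᵀ * Uᵀ * (U * W) = Wᵀ * (Uᵀ * U) * W by noncomm_ring, hU,
      mul_one, hWo]
  calc (U * M).trace = ((U * W) * hH.sqrt).trace := by rw [mul_assoc, ← hMW]
    _ ≤ hH.sqrt.trace := trace_orth_mul_le hH.posSemidef_sqrt horth

lemma exists_orth_trace_eq (M : Matrix (Fin d) (Fin d) ℝ) :
    ∃ U : Matrix (Fin d) (Fin d) ℝ, Uᵀ * U = 1 ∧ (U * M).trace = (psdSqrt (Mᵀ * M)).trace := by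
  have hH := posSemidef_transpose_mul_self M
  obtain ⟨W, hWo, hMW⟩ := polar M hH
  refine ⟨Wᵀ, by rw [transpose_transpose, mul_eq_one_comm.mp hWo], ?_⟩
  rw [psdSqrt_eq hH]
  have hWM : Wᵀ * M = hH.sqrt := by
    conv_lhs => rw [hMW]
    rw [← mul_assoc, hWo, one_mul]
  rw [hWM]

variable {A B : Matrix (Fin d) (Fin d) ℝ}

lemma buresSq_eq_trace (hA : A.PosSemidef) (hB : B.PosSemidef) :
    buresSq A B = A.trace + B.trace
      - 2 * (psdSqrt ((psdSqrt B * psdSqrt A)ᵀ * (psdSqrt B * psdSqrt A))).trace := by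
  have hXY : (psdSqrt B * psdSqrt A)ᵀ * (psdSqrt B * psdSqrt A)
      = psdSqrt A * B * psdSqrt A := by
    rw [transpose_mul, psdSqrt_transpose hA, psdSqrt_transpose hB,
      show psdSqrt A * psdSqrt B * (psdSqrt B * psdSqrt A)
        = psdSqrt A * (psdSqrt B * psdSqrt B) * psdSqrt A by noncomm_ring,
      psdSqrt_mul_self hB]
  rw [buresSq, trace_sub, trace_add, trace_smul, hXY]
  ring

lemma frobSq_diff_eq (hA : A.PosSemidef) (hB : B.PosSemidef)
    (U : Matrix (Fin d) (Fin d) ℝ) (hU : Uᵀ * U = 1) :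
    frobSq (psdSqrt A - psdSqrt B * Uᵀ)
      = A.trace + B.trace - 2 * (U * (psdSqrt B * psdSqrt A)).trace := by
  set X := psdSqrt A with hX
  set Y := psdSqrt B with hY
  have hexp : (X - Y * Uᵀ)ᵀ * (X - Y * Uᵀ)
      = X * X - X * (Y * Uᵀ) - U * (Y * X) + U * (Y * Y) * Uᵀ := by
    rw [transpose_sub, transpose_mul, transpose_transpose, hX, hY, psdSqrt_transpose hA,
      psdSqrt_transpose hB]
    noncomm_ring
  rw [frobSq, hexp, trace_add, trace_sub, trace_sub]
  have h1 : (X * X).trace = A.trace := by rw [hX, psdSqrt_mul_self hA]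
  have h2 : (U * (Y * Y) * Uᵀ).trace = B.trace := by
    rw [trace_mul_comm, show Uᵀ * (U * (Y * Y)) = (Uᵀ * U) * (Y * Y) by noncomm_ring, hU,
      one_mul, hY, psdSqrt_mul_self hB]
  have h3 : (X * (Y * Uᵀ)).trace = (U * (Y * X)).trace := by
    rw [← trace_transpose (X * (Y * Uᵀ)), transpose_mul, transpose_mul, transpose_transpose,
      hX, hY, psdSqrt_transpose hA, psdSqrt_transpose hB, mul_assoc]
  rw [h1, h2, h3]
  ring

lemma buresSq_le_frobSq (hA : A.PosSemidef) (hB : B.PosSemidef)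
    (U : Matrix (Fin d) (Fin d) ℝ) (hU : Uᵀ * U = 1) :
    buresSq A B ≤ frobSq (psdSqrt A - psdSqrt B * Uᵀ) := by
  rw [buresSq_eq_trace hA hB, frobSq_diff_eq hA hB U hU]
  have := trace_orth_le_trace_sqrt (psdSqrt B * psdSqrt A) U hU
  linarith

lemma exists_buresSq_eq_frobSq (hA : A.PosSemidef) (hB : B.PosSemidef) :
    ∃ U : Matrix (Fin d) (Fin d) ℝ, Uᵀ * U = 1 ∧
      buresSq A B = frobSq (psdSqrt A - psdSqrt B * Uᵀ) := by
  obtain ⟨U, hU, heq⟩ := exists_orth_trace_eq (psdSqrt B * psdSqrt A)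
  exact ⟨U, hU, by rw [buresSq_eq_trace hA hB, frobSq_diff_eq hA hB U hU, heq]⟩

end BuresAux

/-- the Bures distance `d_B(A,B) = (d_B²(A,B))^{1/2}` satisfies the triangle
inequality on PSD matrices. -/
theorem stmt4 (d : ℕ) (A B C : Matrix (Fin d) (Fin d) ℝ)
    (hA : A.PosSemidef) (hB : B.PosSemidef) (hC : C.PosSemidef) :
    Real.sqrt (buresSq A C) ≤ Real.sqrt (buresSq A B) + Real.sqrt (buresSq B C) := by
  open BuresAux in
  obtain ⟨U₁, hU₁, h₁⟩ := exists_buresSq_eq_frobSq hA hB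
  obtain ⟨U₂, hU₂, h₂⟩ := exists_buresSq_eq_frobSq hB hC
  set X := psdSqrt A
  set Y := psdSqrt B
  set Z := psdSqrt C
  have hU12 : (U₁ * U₂)ᵀ * (U₁ * U₂) = 1 := by
    rw [transpose_mul, show U₂ᵀ * U₁ᵀ * (U₁ * U₂) = U₂ᵀ * (U₁ᵀ * U₁) * U₂ by noncomm_ring,
      hU₁, mul_one, hU₂]
  have hle : buresSq A C ≤ frobSq (X - Z * (U₁ * U₂)ᵀ) := buresSq_le_frobSq hA hC _ hU12
  have hsplit : X - Z * (U₁ * U₂)ᵀ = (X - Y * U₁ᵀ) + (Y - Z * U₂ᵀ) * U₁ᵀ := by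
    rw [transpose_mul]
    noncomm_ring
  have hinv : frobSq ((Y - Z * U₂ᵀ) * U₁ᵀ) = frobSq (Y - Z * U₂ᵀ) :=
    frobSq_mul_orth _ _ (by rw [transpose_transpose, hU₁])
  calc Real.sqrt (buresSq A C) ≤ Real.sqrt (frobSq (X - Z * (U₁ * U₂)ᵀ)) :=
        Real.sqrt_le_sqrt hle
    _ = Real.sqrt (frobSq ((X - Y * U₁ᵀ) + (Y - Z * U₂ᵀ) * U₁ᵀ)) := by rw [hsplit]
    _ ≤ Real.sqrt (frobSq (X - Y * U₁ᵀ)) + Real.sqrt (frobSq ((Y - Z * U₂ᵀ) * U₁ᵀ)) :=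
        frobSq_add_le _ _
    _ = Real.sqrt (buresSq A B) + Real.sqrt (buresSq B C) := by rw [hinv, ← h₁, ← h₂]
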